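/- Let X_1,...,X_n be negatively associated Bernoulli random variables. Then for every k ≥ 0, E[binom(X, k)] ≤ (Σ_i P(X_i=1))^k / k!, where X = Σ_i X_i. -/

import Mathlib

open MeasureTheory Finset

lemma na_key_step {ι : Type*} [DecidableEq ι] (s : Finset ι) (f : ι → ℝ) (k : ℕ) :
    ∑ t ∈ s.powersetCard k, ∑ i ∈ s \ t, f i * ∏ j ∈ t, f j
      = ((k : ℝ) + 1) * ∑ u ∈ s.powersetCard (k + 1), ∏ j ∈ u, f j := by
  rw [Finset.mul_sum]
  have h1 : ∀ u ∈ s.powersetCard (k + 1),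
      ((k : ℝ) + 1) * ∏ j ∈ u, f j = ∑ _i ∈ u, ∏ j ∈ u, f j := by
    intro u hu
    rw [Finset.sum_const, (Finset.mem_powersetCard.mp hu).2]
    push_cast
    ring
  rw [Finset.sum_congr rfl h1, Finset.sum_sigma', Finset.sum_sigma']
  refine Finset.sum_bij' (fun p _ => ⟨insert p.2 p.1, p.2⟩)
    (fun q _ => ⟨q.1.erase q.2, q.2⟩) ?_ ?_ ?_ ?_ ?_
  · rintro ⟨t, i⟩ hp
    simp only [Finset.mem_sigma, Finset.mem_powersetCard, Finset.mem_sdiff] at hp ⊢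
    obtain ⟨⟨hts, htc⟩, his, hit⟩ := hp
    exact ⟨⟨Finset.insert_subset his hts, by rw [Finset.card_insert_of_notMem hit, htc]⟩,
      Finset.mem_insert_self _ _⟩
  · rintro ⟨u, i⟩ hq
    simp only [Finset.mem_sigma, Finset.mem_powersetCard, Finset.mem_sdiff] at hq ⊢
    obtain ⟨⟨hus, huc⟩, hiu⟩ := hq
    refine ⟨⟨(Finset.erase_subset _ _).trans hus, ?_⟩, hus hiu, Finset.notMem_erase _ _⟩
    rw [Finset.card_erase_of_mem hiu, huc]; omega
  · rintro ⟨t, i⟩ hp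
    simp only [Finset.mem_sigma, Finset.mem_sdiff] at hp
    simp [Finset.erase_insert hp.2.2]
  · rintro ⟨u, i⟩ hq
    simp only [Finset.mem_sigma] at hq
    simp [Finset.insert_erase hq.2]
  · rintro ⟨t, i⟩ hp
    simp only [Finset.mem_sigma, Finset.mem_sdiff] at hp
    exact (Finset.prod_insert hp.2.2).symm

lemma na_factorial_mul_esymm_le {ι : Type*} [DecidableEq ι] (s : Finset ι) (f : ι → ℝ)
    (hf : ∀ i ∈ s, 0 ≤ f i) :
    ∀ k : ℕ, (k.factorial : ℝ) * ∑ t ∈ s.powersetCard k, ∏ j ∈ t, f j ≤ (∑ i ∈ s, f i) ^ k := by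
  intro k
  induction k with
  | zero => simp
  | succ k ih =>
    have hsum0 : (0:ℝ) ≤ ∑ i ∈ s, f i := Finset.sum_nonneg hf
    have hfac : ((k+1).factorial : ℝ) = ((k:ℝ)+1) * (k.factorial : ℝ) := by
      rw [Nat.factorial_succ]; push_cast; ring
    calc ((k+1).factorial : ℝ) * ∑ t ∈ s.powersetCard (k+1), ∏ j ∈ t, f j
        = (k.factorial : ℝ) * (((k:ℝ)+1) * ∑ t ∈ s.powersetCard (k+1), ∏ j ∈ t, f j) := by
          rw [hfac]; ring
      _ = (k.factorial : ℝ) * ∑ t ∈ s.powersetCard k, ∑ i ∈ s \ t, f i * ∏ j ∈ t, f j := by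
          rw [na_key_step]
      _ ≤ (k.factorial : ℝ) * ∑ t ∈ s.powersetCard k, (∑ i ∈ s, f i) * ∏ j ∈ t, f j := by
          refine mul_le_mul_of_nonneg_left (Finset.sum_le_sum ?_) (by positivity)
          intro t ht
          rw [← Finset.sum_mul]
          refine mul_le_mul_of_nonneg_right ?_ (Finset.prod_nonneg fun j hj =>
            hf j ((Finset.mem_powersetCard.mp ht).1 hj))
          exact Finset.sum_le_sum_of_subset_of_nonneg (Finset.sdiff_subset) fun i hi _ => hf i hi
      _ = (∑ i ∈ s, f i) * ((k.factorial : ℝ) * ∑ t ∈ s.powersetCard k, ∏ j ∈ t, f j) := by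
          rw [← Finset.mul_sum]; ring
      _ ≤ (∑ i ∈ s, f i) * (∑ i ∈ s, f i) ^ k := mul_le_mul_of_nonneg_left ih hsum0
      _ = (∑ i ∈ s, f i) ^ (k+1) := by ring

theorem neg_assoc_bernoulli_binom_expectation
    {Ω : Type*} [MeasurableSpace Ω] (μ : Measure Ω) [IsProbabilityMeasure μ]
    (n : ℕ) (X : Fin n → Ω → ℕ)
    (hmeas : ∀ i, Measurable (X i))
    (hBer : ∀ i ω, X i ω ≤ 1)
    (hNA : ∀ s : Finset (Fin n),
      μ {ω | ∀ i ∈ s, X i ω = 1} ≤ ∏ i ∈ s, μ {ω | X i ω = 1})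
    (k : ℕ) :
    ∫ ω, (((∑ i, X i ω).choose k : ℕ) : ℝ) ∂μ ≤
      (∑ i, (μ {ω | X i ω = 1}).toReal) ^ k / (k.factorial : ℝ) := by
  classical
  set E : Finset (Fin n) → Set Ω := fun S => {ω | ∀ i ∈ S, X i ω = 1} with hE_def
  have hE : ∀ S : Finset (Fin n), MeasurableSet (E S) := by
    intro S
    have : E S = ⋂ i ∈ (S : Set (Fin n)), {ω | X i ω = 1} := by ext ω; simp [hE_def]
    rw [this]
    exact MeasurableSet.biInter S.countable_toSet
      fun i _ => (hmeas i) (measurableSet_singleton 1)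
  -- pointwise identity
  have key : ∀ ω, (((∑ i, X i ω).choose k : ℕ) : ℝ)
      = ∑ S ∈ Finset.univ.powersetCard k, ∏ i ∈ S, (X i ω : ℝ) := by
    intro ω
    set A : Finset (Fin n) := Finset.univ.filter (fun i => X i ω = 1) with hA
    have hXi : ∀ i, X i ω = if X i ω = 1 then 1 else 0 := by
      intro i
      rcases Nat.le_one_iff_eq_zero_or_eq_one.mp (hBer i ω) with h | h <;> simp [h]
    have hsum : ∑ i, X i ω = A.card := by
      rw [hA, Finset.card_filter]
      exact Finset.sum_congr rfl fun i _ => hXi i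
    have hprod : ∀ S ∈ Finset.univ.powersetCard k,
        ∏ i ∈ S, (X i ω : ℝ) = if S ⊆ A then 1 else 0 := by
      intro S _
      by_cases h : S ⊆ A
      · rw [if_pos h, Finset.prod_eq_one]
        intro i hi
        have := (Finset.mem_filter.mp (h hi)).2
        simp [this]
      · rw [if_neg h]
        obtain ⟨i, hiS, hiA⟩ := Finset.not_subset.mp h
        refine Finset.prod_eq_zero hiS ?_
        have h1 : X i ω ≠ 1 := fun hc => hiA (Finset.mem_filter.mpr ⟨Finset.mem_univ _, hc⟩)
        rcases Nat.le_one_iff_eq_zero_or_eq_one.mp (hBer i ω) with h0 | h0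
        · simp [h0]
        · exact absurd h0 h1
    rw [Finset.sum_congr rfl hprod, Finset.sum_ite, Finset.sum_const, Finset.sum_const]
    have hfilt : (Finset.univ.powersetCard k).filter (fun S => S ⊆ A) = A.powersetCard k := by
      ext S
      simp only [Finset.mem_filter, Finset.mem_powersetCard]
      constructor
      · rintro ⟨⟨-, hc⟩, hSA⟩; exact ⟨hSA, hc⟩
      · rintro ⟨hSA, hc⟩; exact ⟨⟨Finset.subset_univ _, hc⟩, hSA⟩
    rw [hfilt, Finset.card_powersetCard, hsum]
    simp
  -- indicator identity
  have hind : ∀ (S : Finset (Fin n)) (ω : Ω),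
      ∏ i ∈ S, (X i ω : ℝ) = Set.indicator (E S) (fun _ => (1:ℝ)) ω := by
    intro S ω
    by_cases h : ω ∈ E S
    · rw [Set.indicator_of_mem h, Finset.prod_eq_one]
      intro i hi; simp [h i hi]
    · rw [Set.indicator_of_notMem h]
      simp only [hE_def, Set.mem_setOf_eq, not_forall] at h
      obtain ⟨i, hiS, hi1⟩ := h
      refine Finset.prod_eq_zero hiS ?_
      rcases Nat.le_one_iff_eq_zero_or_eq_one.mp (hBer i ω) with h0 | h0
      · simp [h0]
      · exact absurd h0 hi1
  have hInt : ∀ S : Finset (Fin n), Integrable (fun ω => ∏ i ∈ S, (X i ω : ℝ)) μ := by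
    intro S
    have : (fun ω => ∏ i ∈ S, (X i ω : ℝ)) = (E S).indicator (fun _ => (1:ℝ)) := by
      ext ω; exact hind S ω
    rw [this]
    exact (integrable_const (1:ℝ)).indicator (hE S)
  have hIntEq : ∀ S : Finset (Fin n),
      ∫ ω, ∏ i ∈ S, (X i ω : ℝ) ∂μ = (μ (E S)).toReal := by
    intro S
    have h1 : ∫ ω, ∏ i ∈ S, (X i ω : ℝ) ∂μ = ∫ ω, (E S).indicator (fun _ => (1:ℝ)) ω ∂μ := by
      congr 1; ext ω; exact hind S ω
    rw [h1, integral_indicator_const _ (hE S)]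
    simp [Measure.real]
  have hμeq : ∫ ω, (((∑ i, X i ω).choose k : ℕ) : ℝ) ∂μ
      = ∑ S ∈ Finset.univ.powersetCard k, (μ (E S)).toReal := by
    calc ∫ ω, (((∑ i, X i ω).choose k : ℕ) : ℝ) ∂μ
        = ∫ ω, ∑ S ∈ Finset.univ.powersetCard k, ∏ i ∈ S, (X i ω : ℝ) ∂μ := by
          congr 1; ext ω; exact key ω
      _ = ∑ S ∈ Finset.univ.powersetCard k, ∫ ω, ∏ i ∈ S, (X i ω : ℝ) ∂μ :=
          integral_finset_sum _ fun S _ => hInt S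
      _ = ∑ S ∈ Finset.univ.powersetCard k, (μ (E S)).toReal :=
          Finset.sum_congr rfl fun S _ => hIntEq S
  rw [hμeq]
  set p : Fin n → ℝ := fun i => (μ {ω | X i ω = 1}).toReal with hp
  have hp0 : ∀ i ∈ Finset.univ, 0 ≤ p i := fun i _ => ENNReal.toReal_nonneg
  have step1 : ∑ S ∈ Finset.univ.powersetCard k, (μ (E S)).toReal
      ≤ ∑ S ∈ Finset.univ.powersetCard k, ∏ i ∈ S, p i := by
    refine Finset.sum_le_sum fun S _ => ?_
    have hfin : ∏ i ∈ S, μ {ω | X i ω = 1} ≠ ⊤ :=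
      (ENNReal.prod_lt_top fun i _ => measure_lt_top μ _).ne
    calc (μ (E S)).toReal ≤ (∏ i ∈ S, μ {ω | X i ω = 1}).toReal :=
          ENNReal.toReal_mono hfin (hNA S)
      _ = ∏ i ∈ S, p i := ENNReal.toReal_prod _ _
  have step2 := na_factorial_mul_esymm_le Finset.univ p hp0 k
  have hfacp : (0:ℝ) < (k.factorial : ℝ) := by positivity
  calc ∑ S ∈ Finset.univ.powersetCard k, (μ (E S)).toReal
      ≤ ∑ S ∈ Finset.univ.powersetCard k, ∏ i ∈ S, p i := step1
    _ ≤ (∑ i, p i) ^ k / (k.factorial : ℝ) := by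
        rw [le_div_iff₀ hfacp, mul_comm]
        exact step2
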